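/- For every λ > 0: (i) for each x ∈ X, R_λ(x,x) = (1 − 1/ν) Σ_{s=0}^∞ 1/((λ + p^s) ν^s) (independent of x); (ii) for x₀ ≠ x with r = d_h(x₀,x) ≥ 1, R_λ(x₀,x) = −1/((λ + p^{r−1}) ν^r) + (1 − 1/ν) Σ_{s=r}^∞ 1/((λ + p^s) ν^s). -/

import Mathlib

noncomputable section
open scoped ENNReal

def HX (ν : ℕ) : Type := {x : ℕ → Fin ν // ∃ N, ∀ n, N ≤ n → (x n : ℕ) = 0}
instance (ν : ℕ) : DecidableEq (HX ν) := Classical.decEq _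
abbrev Hl2 (ν : ℕ) : Type := lp (fun _ : HX ν => ℝ) 2
def cube (ν : ℕ) (r : ℕ) (x : HX ν) : Set (HX ν) := {y | ∀ n, r ≤ n → y.1 n = x.1 n}
/-- Hierarchical distance `d_h(x,y) = min {r ≥ 0 : y ∈ Q^{(r)}(x)}`. -/
def dh (ν : ℕ) (x y : HX ν) : ℕ := sInf {r : ℕ | y ∈ cube ν r x}
def hdelta (ν : ℕ) (x : HX ν) : Hl2 ν := lp.single 2 x 1
def cubeSum (ν r : ℕ) (x : HX ν) (ψ : Hl2 ν) : ℝ := ∑' y : cube ν r x, ψ y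
def IsHierLap (ν : ℕ) (p : ℝ) (Δ : Hl2 ν →L[ℝ] Hl2 ν) : Prop :=
  ∀ ψ x, Δ ψ x = ∑' r : ℕ,
    (1 - p) * p ^ r * (((ν : ℝ) ^ (r + 1))⁻¹ * cubeSum ν (r + 1) x ψ - ψ x)

/-- Resolvent kernel `R_λ(x,y) = ⟨(λI − Δ_h)⁻¹ δ_y, δ_x⟩`. -/
def resolvK (ν : ℕ) (Δ : Hl2 ν →L[ℝ] Hl2 ν) (lam : ℝ) (x y : HX ν) : ℝ :=
  @inner ℝ _ _ (Ring.inverse (lam • (1 : Hl2 ν →L[ℝ] Hl2 ν) - Δ) (hdelta ν y)) (hdelta ν x)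


namespace HL
variable {ν : ℕ}

theorem HX.ext {x y : HX ν} (h : ∀ n, x.1 n = y.1 n) : x = y := Subtype.ext (funext h)

def tail (r : ℕ) (x : HX ν) : HX ν :=
  ⟨fun n => x.1 (n + r), by
    obtain ⟨N, hN⟩ := x.2
    exact ⟨N, fun n hn => hN _ (le_trans hn (Nat.le_add_right _ _))⟩⟩

@[simp] theorem tail_apply (r : ℕ) (x : HX ν) (n : ℕ) : (tail r x).1 n = x.1 (n + r) := rfl

def merge (r : ℕ) (v : Fin r → Fin ν) (t : HX ν) : HX ν :=
  ⟨fun n => if h : n < r then v ⟨n, h⟩ else t.1 (n - r), by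
    obtain ⟨N, hN⟩ := t.2
    refine ⟨N + r, fun n hn => ?_⟩
    have h1 : ¬ n < r := by omega
    simp only [h1, dif_neg, not_false_iff]
    exact hN _ (by omega)⟩

theorem merge_apply_lt (r : ℕ) (v : Fin r → Fin ν) (t : HX ν) (n : ℕ) (h : n < r) :
    (merge r v t).1 n = v ⟨n, h⟩ := dif_pos h

theorem merge_apply_ge (r : ℕ) (v : Fin r → Fin ν) (t : HX ν) (n : ℕ) (h : r ≤ n) :
    (merge r v t).1 n = t.1 (n - r) := dif_neg (by omega)

@[simp] theorem tail_merge (r : ℕ) (v : Fin r → Fin ν) (t : HX ν) :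
    tail r (merge r v t) = t := by
  refine HX.ext fun n => ?_
  rw [tail_apply, merge_apply_ge r v t _ (Nat.le_add_left _ _)]
  simp

theorem merge_tail (r : ℕ) (x : HX ν) :
    merge r (fun i => x.1 i) (tail r x) = x := by
  refine HX.ext fun n => ?_
  by_cases h : n < r
  · rw [merge_apply_lt r _ _ n h]
  · rw [merge_apply_ge r _ _ n (by omega), tail_apply,
      Nat.sub_add_cancel (show r ≤ n by omega)]

theorem mem_cube_iff_tail {r : ℕ} {x y : HX ν} : y ∈ cube ν r x ↔ tail r y = tail r x := by
  constructor
  · intro h; exact HX.ext fun n => h (n + r) (Nat.le_add_left _ _)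
  · intro h n hn
    have h2 := congrArg (fun z : HX ν => z.1 (n - r)) h
    simp only [tail_apply] at h2
    rwa [Nat.sub_add_cancel hn] at h2

theorem self_mem_cube (r : ℕ) (x : HX ν) : x ∈ cube ν r x := fun _ _ => rfl

theorem cube_mono {r s : ℕ} (h : r ≤ s) (x : HX ν) : cube ν r x ⊆ cube ν s x :=
  fun _ hy n hn => hy n (le_trans h hn)

theorem cube_zero (x y : HX ν) : y ∈ cube ν 0 x ↔ y = x := by
  constructor
  · intro h; exact HX.ext fun n => h n (Nat.zero_le _)
  · intro h; rw [h]; exact self_mem_cube 0 x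

theorem exists_mem_cube (x y : HX ν) : ∃ r, y ∈ cube ν r x := by
  obtain ⟨N, hN⟩ := x.2
  obtain ⟨M, hM⟩ := y.2
  refine ⟨max N M, fun n hn => ?_⟩
  have h1 := hN n (le_trans (le_max_left _ _) hn)
  have h2 := hM n (le_trans (le_max_right _ _) hn)
  exact Fin.ext (by omega)

theorem dh_le_iff {s : ℕ} {x y : HX ν} : dh ν x y ≤ s ↔ y ∈ cube ν s x := by
  constructor
  · intro h
    have hne : {r : ℕ | y ∈ cube ν r x}.Nonempty := exists_mem_cube x y
    have := Nat.sInf_mem hne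
    exact cube_mono h x this
  · intro h; exact Nat.sInf_le h

@[simp] theorem dh_self (x : HX ν) : dh ν x x = 0 :=
  Nat.le_zero.mp (dh_le_iff.mpr (self_mem_cube 0 x))

theorem dh_pos {x y : HX ν} (h : x ≠ y) : 1 ≤ dh ν x y := by
  by_contra hc
  have h0 : dh ν x y ≤ 0 := by omega
  exact h ((cube_zero x y).mp (dh_le_iff.mp h0)).symm

/-- the cube of rank `r` around `x`, as an equiv with `Fin r → Fin ν`. -/
def cubeEquiv (r : ℕ) (x : HX ν) : cube ν r x ≃ (Fin r → Fin ν) where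
  toFun y := fun i => y.1.1 i
  invFun v := ⟨merge r v (tail r x), mem_cube_iff_tail.mpr (tail_merge r v _)⟩
  left_inv := by
    rintro ⟨y, hy⟩
    refine Subtype.ext (HX.ext fun n => ?_)
    by_cases h : n < r
    · rw [merge_apply_lt _ _ _ n h]
    · rw [merge_apply_ge _ _ _ n (by omega), tail_apply,
        Nat.sub_add_cancel (show r ≤ n by omega)]
      have h1 := congrArg (fun z : HX ν => z.1 (n - r)) (mem_cube_iff_tail.mp hy).symm
      simp only [tail_apply] at h1
      rw [Nat.sub_add_cancel (show r ≤ n by omega)] at h1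
      exact h1
  right_inv := by
    intro v; funext i
    simp only
    rw [merge_apply_lt r v _ i.1 i.2]

theorem cubeSum_eq (r : ℕ) (x : HX ν) (ψ : Hl2 ν) :
    cubeSum ν r x ψ = ∑ v : Fin r → Fin ν, ψ (merge r v (tail r x)) := by
  rw [cubeSum, ← Equiv.tsum_eq (cubeEquiv r x).symm (fun y => ψ y.1), tsum_fintype]
  rfl

/-- the global splitting equiv. -/
def splitEquiv (r : ℕ) : HX ν ≃ (Fin r → Fin ν) × HX ν where
  toFun x := (fun i => x.1 i, tail r x)
  invFun q := merge r q.1 q.2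
  left_inv x := merge_tail r x
  right_inv := by
    rintro ⟨v, t⟩
    refine Prod.ext (funext fun i => ?_) (tail_merge r v t)
    simp only
    rw [merge_apply_lt r v t i.1 i.2]

end HL

section S2
namespace HL
variable {ν : ℕ}

theorem sq_summable (ψ : Hl2 ν) : Summable fun x => (ψ x : ℝ) ^ 2 := by
  have h := (lp.memℓp ψ).summable (p := 2) (by norm_num)
  have he : ∀ x : HX ν, ‖ψ x‖ ^ (2 : ℝ≥0∞).toReal = (ψ x) ^ 2 := fun x => by
    rw [show (2 : ℝ≥0∞).toReal = ((2 : ℕ) : ℝ) by norm_num, Real.rpow_natCast]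
    simp [sq_abs]
  simpa [he] using h

def esplit (r : ℕ) : HX ν ≃ HX ν × (Fin r → Fin ν) :=
  (splitEquiv r).trans (Equiv.prodComm _ _)

theorem esplit_symm_apply (r : ℕ) (q : HX ν × (Fin r → Fin ν)) :
    (esplit r).symm q = merge r q.2 q.1 := rfl

theorem summable_split_iff (r : ℕ) (f : HX ν → ℝ) (hf : ∀ x, 0 ≤ f x) :
    Summable f ↔ Summable fun t : HX ν => ∑ v : Fin r → Fin ν, f (merge r v t) := by
  rw [← (esplit r).symm.summable_iff (f := f)]
  rw [show (f ∘ (esplit r).symm) = fun q : HX ν × (Fin r → Fin ν) => f (merge r q.2 q.1) from rfl]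
  rw [summable_prod_of_nonneg (fun q => hf _)]
  constructor
  · rintro ⟨-, h2⟩
    simpa [tsum_fintype] using h2
  · intro h
    exact ⟨fun t => Summable.of_finite, by simpa [tsum_fintype] using h⟩

theorem tsum_split (r : ℕ) (f : HX ν → ℝ) (hf : Summable f) :
    ∑' x, f x = ∑' t : HX ν, ∑ v : Fin r → Fin ν, f (merge r v t) := by
  rw [← (esplit r).symm.tsum_eq f]
  have hs : Summable (f ∘ (esplit r).symm) := (esplit r).symm.summable_iff.mpr hf
  rw [show (fun q : HX ν × (Fin r → Fin ν) => f ((esplit r).symm q)) = f ∘ (esplit r).symm from rfl]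
  rw [Summable.tsum_prod' hs (fun t => Summable.of_finite)]
  exact tsum_congr fun t => by simp [tsum_fintype, esplit_symm_apply, Function.comp]

theorem merge_zero (v : Fin 0 → Fin ν) (t : HX ν) : merge 0 v t = t :=
  HX.ext fun n => by rw [merge_apply_ge 0 v t n (Nat.zero_le _)]; simp

theorem tail_zero (x : HX ν) : tail 0 x = x := HX.ext fun n => by rw [tail_apply]; simp

def Pfun (r : ℕ) (ψ : Hl2 ν) (x : HX ν) : ℝ :=
  ((ν : ℝ) ^ r)⁻¹ * ∑ v : Fin r → Fin ν, ψ (merge r v (tail r x))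

theorem Pfun_tail (r : ℕ) (ψ : Hl2 ν) {x y : HX ν} (h : tail r x = tail r y) :
    Pfun r ψ x = Pfun r ψ y := by unfold Pfun; rw [h]

theorem card_fun (r : ℕ) : (Fintype.card (Fin r → Fin ν) : ℝ) = (ν : ℝ) ^ r := by
  rw [Fintype.card_fun]; push_cast; simp

section Pos
variable (hν : 2 ≤ ν)
include hν

theorem nu_pos : (0:ℝ) < (ν:ℝ) := by
  have : (2:ℝ) ≤ (ν:ℝ) := by exact_mod_cast hν
  linarith

/-- `Sv r ψ t = ∑_v ψ (merge r v t)` -/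
theorem Pfun_merge (r : ℕ) (ψ : Hl2 ν) (v : Fin r → Fin ν) (t : HX ν) :
    Pfun r ψ (merge r v t) = ((ν : ℝ) ^ r)⁻¹ * ∑ w : Fin r → Fin ν, ψ (merge r w t) := by
  unfold Pfun; rw [tail_merge]

theorem summable_sq_Pfun (r : ℕ) (ψ : Hl2 ν) :
    Summable (fun x => (Pfun r ψ x) ^ 2) ∧
      ∑' x, (Pfun r ψ x) ^ 2 ≤ ∑' x, (ψ x : ℝ) ^ 2 := by
  have hν0 := nu_pos hν
  have hνr : (0:ℝ) < (ν:ℝ) ^ r := by positivity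
  set S : HX ν → ℝ := fun t => ∑ w : Fin r → Fin ν, ψ (merge r w t) with hS
  set G : HX ν → ℝ := fun t => ∑ w : Fin r → Fin ν, (ψ (merge r w t) : ℝ) ^ 2 with hG
  have hGsum : Summable G := by
    have := (summable_split_iff r (fun x => (ψ x : ℝ) ^ 2) (fun x => sq_nonneg _)).mp
      (sq_summable ψ)
    exact this
  have hCS : ∀ t, (S t) ^ 2 ≤ (ν:ℝ) ^ r * G t := fun t => by
    have := sq_sum_le_card_mul_sum_sq (s := (Finset.univ : Finset (Fin r → Fin ν)))
      (f := fun w => (ψ (merge r w t) : ℝ))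
    calc (S t)^2 ≤ (Finset.univ.card : ℝ) * G t := by exact_mod_cast this
    _ = (ν:ℝ)^r * G t := by rw [Finset.card_univ, card_fun]
  have hpt : ∀ t, (∑ v : Fin r → Fin ν, (Pfun r ψ (merge r v t)) ^ 2) =
      ((ν:ℝ) ^ r)⁻¹ * (S t) ^ 2 := fun t => by
    have : ∀ v : Fin r → Fin ν, (Pfun r ψ (merge r v t)) ^ 2 =
        (((ν : ℝ) ^ r)⁻¹ * S t) ^ 2 := fun v => by rw [Pfun_merge hν, hS]
    rw [Finset.sum_congr rfl (fun v _ => this v), Finset.sum_const, Finset.card_univ]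
    rw [nsmul_eq_mul, card_fun, mul_pow]
    field_simp
  have hle : ∀ t, ((ν:ℝ) ^ r)⁻¹ * (S t) ^ 2 ≤ G t := fun t => by
    have h1 := hCS t
    rw [inv_mul_le_iff₀ hνr]
    linarith [hCS t]
  have hsum : Summable (fun x => (Pfun r ψ x) ^ 2) := by
    rw [summable_split_iff r _ (fun x => sq_nonneg _)]
    refine Summable.of_nonneg_of_le (fun t => ?_) (fun t => ?_) hGsum
    · exact Finset.sum_nonneg fun v _ => sq_nonneg _
    · rw [hpt t]; exact hle t
  refine ⟨hsum, ?_⟩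
  rw [tsum_split r _ hsum, tsum_split r _ (sq_summable ψ)]
  refine Summable.tsum_le_tsum (fun t => ?_) ((summable_split_iff r _ (fun x => sq_nonneg _)).mp hsum)
    hGsum
  rw [hpt t]; exact hle t

theorem memPfun (r : ℕ) (ψ : Hl2 ν) : Memℓp (Pfun r ψ) 2 := by
  apply memℓp_gen
  have he : ∀ x : HX ν, ‖Pfun r ψ x‖ ^ (2 : ℝ≥0∞).toReal = (Pfun r ψ x) ^ 2 := fun x => by
    rw [show (2 : ℝ≥0∞).toReal = ((2 : ℕ) : ℝ) by norm_num, Real.rpow_natCast]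
    simp [sq_abs]
  simpa [he] using (summable_sq_Pfun hν r ψ).1

def PopL (r : ℕ) : Hl2 ν →ₗ[ℝ] Hl2 ν where
  toFun ψ := ⟨Pfun r ψ, memPfun hν r ψ⟩
  map_add' ψ φ := by
    apply lp.ext
    funext x
    have : ∀ y : HX ν, ((ψ + φ) : Hl2 ν) y = ψ y + φ y := fun y => by
      rw [lp.coeFn_add]; rfl
    show Pfun r (ψ + φ) x = Pfun r ψ x + Pfun r φ x
    unfold Pfun
    simp only [this, Finset.sum_add_distrib, mul_add]
  map_smul' c ψ := by
    apply lp.ext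
    funext x
    have : ∀ y : HX ν, ((c • ψ) : Hl2 ν) y = c * ψ y := fun y => by
      rw [lp.coeFn_smul]; rfl
    show Pfun r (c • ψ) x = c * Pfun r ψ x
    unfold Pfun
    simp only [this, ← Finset.mul_sum]
    ring

theorem PopL_norm (r : ℕ) (ψ : Hl2 ν) : ‖PopL hν r ψ‖ ≤ 1 * ‖ψ‖ := by
  rw [one_mul]
  have h2 : (0:ℝ) < (2 : ℝ≥0∞).toReal := by norm_num
  have key : ∀ f : Hl2 ν, ‖f‖ ^ (2:ℕ) = ∑' x : HX ν, (f x : ℝ) ^ 2 := fun f => by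
    have h := lp.norm_rpow_eq_tsum h2 f
    rw [show (2 : ℝ≥0∞).toReal = ((2:ℕ):ℝ) by norm_num, Real.rpow_natCast] at h
    rw [h]
    exact tsum_congr fun x => by rw [Real.rpow_natCast]; simp [sq_abs]
  have hle := (summable_sq_Pfun hν r ψ).2
  have hsq : ‖PopL hν r ψ‖ ^ (2:ℕ) ≤ ‖ψ‖ ^ (2:ℕ) := by
    rw [key, key]; exact hle
  nlinarith [norm_nonneg (PopL hν r ψ), norm_nonneg ψ]

def Pop (r : ℕ) : Hl2 ν →L[ℝ] Hl2 ν :=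
  LinearMap.mkContinuous (PopL hν r) 1 (PopL_norm hν r)

theorem Pop_norm (r : ℕ) : ‖Pop hν r‖ ≤ 1 :=
  LinearMap.mkContinuous_norm_le _ (by norm_num) _

theorem Pop_apply (r : ℕ) (ψ : Hl2 ν) (x : HX ν) :
    (Pop hν r ψ) x = ((ν : ℝ) ^ r)⁻¹ * cubeSum ν r x ψ := by
  rw [cubeSum_eq]; rfl

theorem Pop_apply' (r : ℕ) (ψ : Hl2 ν) (x : HX ν) : (Pop hν r ψ) x = Pfun r ψ x := rfl

theorem Pop_zero : Pop hν 0 = 1 := by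
  refine ContinuousLinearMap.ext fun ψ => lp.ext (funext fun x => ?_)
  rw [Pop_apply']
  show Pfun 0 ψ x = ψ x
  unfold Pfun
  rw [Finset.sum_congr rfl (fun v _ => by rw [merge_zero, tail_zero])]
  simp

end Pos
end HL
end S2

section S3
namespace HL
variable {ν : ℕ}

theorem tail_tail (a b : ℕ) (x : HX ν) : tail a (tail b x) = tail (a + b) x :=
  HX.ext fun n => by simp only [tail_apply]; exact congrArg x.1 (by omega)

theorem tail_add_merge (s d : ℕ) (w : Fin s → Fin ν) (u : HX ν) :
    tail (s + d) (merge s w u) = tail d u :=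
  HX.ext fun n => by
    rw [tail_apply, merge_apply_ge s w u _ (by omega), tail_apply]
    exact congrArg u.1 (by omega)

def glue (s d : ℕ) (w : Fin s → Fin ν) (v : Fin d → Fin ν) : Fin (s + d) → Fin ν :=
  fun i => if h : i.1 < s then w ⟨i.1, h⟩ else v ⟨i.1 - s, by have := i.2; omega⟩

def gsplit (s d : ℕ) : (Fin (s + d) → Fin ν) ≃ (Fin s → Fin ν) × (Fin d → Fin ν) where
  toFun u := (fun i => u ⟨i.1, by have := i.2; omega⟩, fun j => u ⟨j.1 + s, by have := j.2; omega⟩)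
  invFun q := glue s d q.1 q.2
  left_inv u := funext fun i => by
    by_cases h : i.1 < s
    · simp only [glue, dif_pos h]
    · simp only [glue, dif_neg h]
      exact congrArg u (Fin.ext (by simp; omega))
  right_inv q := by
    refine Prod.ext (funext fun i => ?_) (funext fun j => ?_)
    · simp only [glue, dif_pos i.2]
    · have hj : ¬ (j.1 + s < s) := by omega
      simp only [glue, dif_neg hj]
      exact congrArg q.2 (Fin.ext (by simp))

theorem tail_merge_add (s d : ℕ) (u : Fin (s + d) → Fin ν) (t : HX ν) :
    tail s (merge (s + d) u t) = merge d ((gsplit s d u).2) t :=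
  HX.ext fun n => by
    rw [tail_apply]
    by_cases h : n < d
    · rw [merge_apply_lt (s + d) u t _ (by omega), merge_apply_lt d _ t _ h]
      show u _ = u _
      exact congrArg u (Fin.ext (by simp [Nat.add_comm]))
    · rw [merge_apply_ge (s + d) u t _ (by omega), merge_apply_ge d _ t _ (by omega)]
      exact congrArg t.1 (by omega)

theorem merge_merge (s d : ℕ) (w : Fin s → Fin ν) (v : Fin d → Fin ν) (t : HX ν) :
    merge s w (merge d v t) = merge (s + d) (glue s d w v) t :=
  HX.ext fun n => by
    by_cases h : n < s
    · rw [merge_apply_lt s w _ _ h, merge_apply_lt (s + d) _ t _ (by omega)]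
      simp only [glue, dif_pos h]
    · rw [merge_apply_ge s w _ _ (by omega)]
      by_cases h2 : n < s + d
      · rw [merge_apply_lt (s + d) _ t _ h2, merge_apply_lt d v t _ (by omega)]
        simp only [glue, dif_neg h]
      · rw [merge_apply_ge d v t _ (by omega), merge_apply_ge (s + d) _ t _ (by omega)]
        exact congrArg t.1 (by omega)

section Pos
variable (hν : 2 ≤ ν)
include hν

theorem Pop_small_big (s d : ℕ) (ψ : Hl2 ν) :
    Pop hν s (Pop hν (s + d) ψ) = Pop hν (s + d) ψ := by
  have hν0 := nu_pos hν
  refine lp.ext (funext fun x => ?_)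
  have hterm : ∀ w : Fin s → Fin ν,
      (Pop hν (s + d) ψ : Hl2 ν) (merge s w (tail s x)) = Pfun (s + d) ψ x := fun w => by
    rw [Pop_apply']
    apply Pfun_tail
    rw [tail_add_merge, tail_tail, Nat.add_comm d s]
  show Pfun s (Pop hν (s + d) ψ) x = Pfun (s + d) ψ x
  calc Pfun s (Pop hν (s + d) ψ) x
      = ((ν : ℝ) ^ s)⁻¹ * ∑ w : Fin s → Fin ν,
          (Pop hν (s + d) ψ : Hl2 ν) (merge s w (tail s x)) := rfl
    _ = ((ν : ℝ) ^ s)⁻¹ * ∑ _w : Fin s → Fin ν, Pfun (s + d) ψ x := by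
        simp only [hterm]
    _ = Pfun (s + d) ψ x := by
        rw [Finset.sum_const, Finset.card_univ, nsmul_eq_mul, card_fun]
        field_simp

theorem Pop_big_small (s d : ℕ) (ψ : Hl2 ν) :
    Pop hν (s + d) (Pop hν s ψ) = Pop hν (s + d) ψ := by
  have hν0 := nu_pos hν
  refine lp.ext (funext fun x => ?_)
  set t := tail (s + d) x with ht
  have hterm : ∀ u : Fin (s + d) → Fin ν,
      (Pop hν s ψ : Hl2 ν) (merge (s + d) u t) =
        ((ν : ℝ) ^ s)⁻¹ * ∑ w : Fin s → Fin ν,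
          ψ (merge (s + d) ((gsplit s d).symm (w, (gsplit s d u).2)) t) := fun u => by
    rw [Pop_apply']
    show ((ν : ℝ) ^ s)⁻¹ * ∑ w : Fin s → Fin ν,
        ψ (merge s w (tail s (merge (s + d) u t))) = _
    congr 1
    refine Finset.sum_congr rfl fun w _ => ?_
    rw [tail_merge_add, merge_merge]
    rfl
  show Pfun (s + d) (Pop hν s ψ) x = Pfun (s + d) ψ x
  have hg : ∀ q : (Fin s → Fin ν) × (Fin d → Fin ν),
      (gsplit s d (ν := ν) ((gsplit s d).symm q)).2 = q.2 := fun q => by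
    rw [Equiv.apply_symm_apply]
  calc Pfun (s + d) (Pop hν s ψ) x
      = ((ν : ℝ) ^ (s + d))⁻¹ * ∑ u : Fin (s + d) → Fin ν,
          (Pop hν s ψ : Hl2 ν) (merge (s + d) u t) := rfl
    _ = ((ν : ℝ) ^ (s + d))⁻¹ * (((ν : ℝ) ^ s)⁻¹ * ∑ u : Fin (s + d) → Fin ν,
          ∑ w : Fin s → Fin ν,
            ψ (merge (s + d) ((gsplit s d).symm (w, (gsplit s d u).2)) t)) := by
        simp only [hterm, Finset.mul_sum]
    _ = ((ν : ℝ) ^ (s + d))⁻¹ * (((ν : ℝ) ^ s)⁻¹ * ((ν : ℝ) ^ s * ∑ u : Fin (s + d) → Fin ν,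
            ψ (merge (s + d) u t))) := by
        congr 1
        have hL : (∑ u : Fin (s + d) → Fin ν, ∑ w : Fin s → Fin ν,
            (ψ : ∀ _ : HX ν, ℝ) (merge (s + d) ((gsplit s d).symm (w, (gsplit s d u).2)) t))
            = (Finset.univ (α := Fin s → Fin ν)).card •
              ∑ b : Fin d → Fin ν, ∑ w : Fin s → Fin ν,
                (ψ : ∀ _ : HX ν, ℝ) (merge (s + d) ((gsplit s d).symm (w, b)) t) := by
          rw [← Equiv.sum_comp (gsplit s d).symm (fun u => ∑ w : Fin s → Fin ν,
            (ψ : ∀ _ : HX ν, ℝ) (merge (s + d) ((gsplit s d).symm (w, (gsplit s d u).2)) t))]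
          simp only [hg]
          rw [Fintype.sum_prod_type]
          dsimp only
          rw [Finset.sum_const]
        have hR : (∑ u : Fin (s + d) → Fin ν, (ψ : ∀ _ : HX ν, ℝ) (merge (s + d) u t))
            = ∑ w : Fin s → Fin ν, ∑ b : Fin d → Fin ν,
                (ψ : ∀ _ : HX ν, ℝ) (merge (s + d) ((gsplit s d).symm (w, b)) t) := by
          rw [← Equiv.sum_comp (gsplit s d).symm
            (fun u => (ψ : ∀ _ : HX ν, ℝ) (merge (s + d) u t)), Fintype.sum_prod_type]
        rw [hL, hR, Finset.sum_comm, nsmul_eq_mul, Finset.card_univ, card_fun]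
    _ = Pfun (s + d) ψ x := by
        show _ = ((ν : ℝ) ^ (s + d))⁻¹ *
          ∑ u : Fin (s + d) → Fin ν, ψ (merge (s + d) u (tail (s + d) x))
        rw [← ht]
        congr 1
        rw [← mul_assoc, inv_mul_cancel₀ (by positivity)]
        ring

theorem Pop_mul (r s : ℕ) : Pop hν r * Pop hν s = Pop hν (max r s) := by
  rcases le_total s r with h | h
  · obtain ⟨d, rfl⟩ : ∃ d, r = s + d := ⟨r - s, by omega⟩
    rw [max_eq_left h]
    exact ContinuousLinearMap.ext fun ψ => Pop_big_small hν s d ψ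
  · obtain ⟨d, rfl⟩ : ∃ d, s = r + d := ⟨s - r, by omega⟩
    rw [max_eq_right h]
    exact ContinuousLinearMap.ext fun ψ => Pop_small_big hν r d ψ

end Pos
end HL
end S3

section S4
set_option maxHeartbeats 2000000
namespace HL
open Filter Finset
variable {ν : ℕ}

/-- evaluation functional -/
def evx (x : HX ν) : Hl2 ν →L[ℝ] ℝ :=
  LinearMap.mkContinuous
    { toFun := fun ψ => ψ x
      map_add' := fun ψ φ => rfl
      map_smul' := fun c ψ => rfl }
    1 (fun ψ => by
      show ‖ψ x‖ ≤ 1 * ‖ψ‖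
      simpa using lp.norm_apply_le_norm (by norm_num : (2:ℝ≥0∞) ≠ 0) ψ x)

@[simp] theorem evx_apply (x : HX ν) (ψ : Hl2 ν) : evx x ψ = ψ x := rfl

/-- evaluation of an operator: `F ↦ (F ψ) x`. -/
def evop (ψ : Hl2 ν) (x : HX ν) : (Hl2 ν →L[ℝ] Hl2 ν) →L[ℝ] ℝ :=
  (evx x).comp ((ContinuousLinearMap.apply ℝ (Hl2 ν)) ψ)

@[simp] theorem evop_apply (ψ : Hl2 ν) (x : HX ν) (F : Hl2 ν →L[ℝ] Hl2 ν) :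
    evop ψ x F = F ψ x := rfl

section Coef
variable (p lam : ℝ)

def cc (s : ℕ) : ℝ := (lam + p ^ s)⁻¹

def aa : ℕ → ℝ := fun r => if r = 0 then lam + 1 else -((1 - p) * p ^ (r - 1))

def bb : ℕ → ℝ := fun s => if s = 0 then cc p lam 0 else cc p lam s - cc p lam (s - 1)

variable {p lam} (hp0 : 0 < p) (hp1 : p < 1) (hlam : 0 < lam)
include hp0 hp1 hlam

theorem hden (s : ℕ) : 0 < lam + p ^ s := by positivity

theorem cc_pos (s : ℕ) : 0 < cc p lam s := by
  rw [cc]; exact inv_pos.mpr (hden hp0 hp1 hlam s)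

theorem cc_le (s : ℕ) : cc p lam s ≤ lam⁻¹ := by
  rw [cc]
  apply inv_anti₀ hlam
  nlinarith [pow_pos hp0 s]

theorem cc_mono (s : ℕ) : cc p lam s ≤ cc p lam (s + 1) := by
  rw [cc, cc]
  apply inv_anti₀ (hden hp0 hp1 hlam (s + 1))
  have : p ^ (s + 1) ≤ p ^ s := by
    calc p ^ (s + 1) = p ^ s * p := by ring
    _ ≤ p ^ s * 1 := by nlinarith [pow_pos hp0 s]
    _ = p ^ s := by ring
  linarith

theorem bb_nonneg (s : ℕ) : 0 ≤ bb p lam s := by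
  rcases s with _ | s
  · exact le_of_lt (by simpa [bb] using cc_pos hp0 hp1 hlam 0)
  · have := cc_mono hp0 hp1 hlam s
    simp only [bb, Nat.succ_ne_zero, if_false, Nat.succ_sub_one]
    linarith

theorem bb_telescope (N : ℕ) : ∑ s ∈ range (N + 1), bb p lam s = cc p lam N := by
  induction N with
  | zero => simp [bb]
  | succ N ih =>
      rw [Finset.sum_range_succ, ih]
      simp only [bb, Nat.succ_ne_zero, if_false, Nat.succ_sub_one]
      ring

theorem bb_summable : Summable (bb p lam) := by
  apply summable_of_sum_range_le (c := lam⁻¹) (bb_nonneg hp0 hp1 hlam)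
  intro n
  rcases n with _ | n
  · simp; positivity
  · rw [bb_telescope hp0 hp1 hlam]
    exact cc_le hp0 hp1 hlam n

theorem aa_telescope (N : ℕ) : ∑ r ∈ range (N + 1), aa p lam r = lam + p ^ N := by
  induction N with
  | zero => simp [aa]
  | succ N ih =>
      rw [Finset.sum_range_succ, ih]
      simp only [aa, Nat.succ_ne_zero, if_false, Nat.succ_sub_one]
      ring

theorem aa_abs_summable : Summable (fun r => |aa p lam r|) := by
  apply (summable_nat_add_iff 1).mp
  have : ∀ n : ℕ, |aa p lam (n + 1)| = (1 - p) * p ^ n := fun n => by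
    simp only [aa, Nat.add_sub_cancel, Nat.succ_ne_zero, if_false, abs_neg]
    rw [abs_of_nonneg (by nlinarith [pow_pos hp0 n])]
  rw [funext this]
  exact (summable_geometric_of_lt_one (le_of_lt hp0) hp1).mul_left _

theorem sq_aabb (N : ℕ) :
    (∑ r ∈ range (N + 1), aa p lam r) * (∑ s ∈ range (N + 1), bb p lam s) = 1 := by
  rw [aa_telescope hp0 hp1 hlam, bb_telescope hp0 hp1 hlam, cc]
  exact mul_inv_cancel₀ (ne_of_gt (hden hp0 hp1 hlam N))

end Coef

section Op
variable (hν : 2 ≤ ν)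

theorem norm_smul_Pop_le (c : ℝ) (t : ℕ) : ‖c • Pop hν t‖ ≤ |c| := by
  refine le_trans (norm_smul_le c (Pop hν t)) ?_
  have h1 := Pop_norm hν t
  have h2 : ‖c‖ = |c| := Real.norm_eq_abs c
  nlinarith [abs_nonneg c]

theorem op_summable {γ : ℕ → ℝ} (hγ : Summable fun r => |γ r|) (g : ℕ → ℕ) :
    Summable (fun r => γ r • Pop hν (g r)) := by
  apply Summable.of_norm_bounded (g := fun r => |γ r|) hγ
  intro r
  exact norm_smul_Pop_le hν _ _

theorem series_mul (γ δ : ℕ → ℝ) (hγ : Summable fun r => |γ r|)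
    (hδ : Summable fun s => |δ s|) :
    (∑' r, γ r • Pop hν r) * (∑' s, δ s • Pop hν s) =
      ∑' q : ℕ × ℕ, (γ q.1 * δ q.2) • Pop hν (max q.1 q.2) := by
  have hA := op_summable hν hγ id
  have hB := op_summable hν hδ id
  have hf : Summable (fun q : ℕ × ℕ => (γ q.1 * δ q.2) • Pop hν (max q.1 q.2)) := by
    apply Summable.of_norm_bounded (g := fun q : ℕ × ℕ => |γ q.1| * |δ q.2|)
    · exact hγ.mul_of_nonneg hδ (fun r => abs_nonneg _) (fun s => abs_nonneg _)
    · intro q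
      refine le_trans (norm_smul_Pop_le hν _ _) ?_
      rw [abs_mul]
  have step1 : (∑' r, γ r • Pop hν r) * (∑' s, δ s • Pop hν s) =
      ∑' r, γ r • (Pop hν r * (∑' s, δ s • Pop hν s)) := by
    have h := ContinuousLinearMap.map_tsum
      ((ContinuousLinearMap.compL ℝ (Hl2 ν) (Hl2 ν) (Hl2 ν)).flip (∑' s, δ s • Pop hν s)) hA
    simp only [ContinuousLinearMap.map_smul] at h
    exact h
  have step2 : ∀ r, Pop hν r * (∑' s, δ s • Pop hν s) =
      ∑' s, δ s • Pop hν (max r s) := fun r => by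
    have h := ContinuousLinearMap.map_tsum
      (ContinuousLinearMap.compL ℝ (Hl2 ν) (Hl2 ν) (Hl2 ν) (Pop hν r)) hB
    simp only [ContinuousLinearMap.map_smul] at h
    calc Pop hν r * (∑' s, δ s • Pop hν s) = ∑' s, δ s • (Pop hν r * Pop hν s) := h
    _ = ∑' s, δ s • Pop hν (max r s) := tsum_congr fun s => by rw [Pop_mul]
  have step3 : ∀ r, γ r • (∑' s, δ s • Pop hν (max r s)) =
      ∑' s, (γ r * δ s) • Pop hν (max r s) := fun r => by
    rw [← Summable.tsum_const_smul (γ r) (op_summable hν hδ (fun s => max r s))]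
    exact tsum_congr fun s => by rw [smul_smul]
  rw [step1]
  simp only [step2, step3]
  have hslice : ∀ r, Summable (fun s => (γ r * δ s) • Pop hν (max r s)) := fun r => by
    apply Summable.of_norm_bounded (g := fun s => |γ r| * |δ s|) (hδ.mul_left _)
    intro s
    refine le_trans (norm_smul_Pop_le hν _ _) ?_
    rw [abs_mul]
  rw [Summable.tsum_prod' hf hslice]

variable {p lam : ℝ} (hp0 : 0 < p) (hp1 : p < 1) (hlam : 0 < lam)

def Aop (p lam : ℝ) : Hl2 ν →L[ℝ] Hl2 ν := ∑' r, aa p lam r • Pop hν r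
def Bop (p lam : ℝ) : Hl2 ν →L[ℝ] Hl2 ν := ∑' s, bb p lam s • Pop hν s

include hp0 hp1 hlam

theorem bb_abs_summable : Summable (fun s => |bb p lam s|) := by
  simpa [abs_of_nonneg (bb_nonneg hp0 hp1 hlam _)] using bb_summable hp0 hp1 hlam

theorem double_eq_one :
    ∑' q : ℕ × ℕ, (aa p lam q.1 * bb p lam q.2) • Pop hν (max q.1 q.2) = 1 := by
  classical
  set f : ℕ × ℕ → Hl2 ν →L[ℝ] Hl2 ν :=
    fun q => (aa p lam q.1 * bb p lam q.2) • Pop hν (max q.1 q.2) with hfdef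
  have hf : Summable f := by
    apply Summable.of_norm_bounded (g := fun q : ℕ × ℕ => |aa p lam q.1| * |bb p lam q.2|)
    · exact (aa_abs_summable hp0 hp1 hlam).mul_of_nonneg (bb_abs_summable hp0 hp1 hlam)
        (fun r => abs_nonneg _) (fun s => abs_nonneg _)
    · intro q
      simp only [hfdef]
      refine le_trans (norm_smul_Pop_le hν _ _) ?_
      rw [abs_mul]
  have hsqscal : ∀ M : ℕ,
      (∑ q ∈ range (M + 1) ×ˢ range (M + 1), aa p lam q.1 * bb p lam q.2) = 1 := fun M => by
    rw [Finset.sum_product, ← Finset.sum_mul_sum]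
    exact sq_aabb hp0 hp1 hlam M
  have hW : ∀ N : ℕ, (∑ q ∈ range (N + 1) ×ˢ range (N + 1), f q) = 1 := by
    intro N
    induction N with
    | zero =>
        rw [Finset.sum_product]
        simp only [zero_add, Finset.sum_range_one]
        simp only [hfdef, max_self]
        rw [Pop_zero]
        have hone : aa p lam 0 * bb p lam 0 = 1 := by
          have ha : aa p lam 0 = lam + 1 := by simp [aa]
          have hb : bb p lam 0 = (lam + 1)⁻¹ := by simp [bb, cc]
          rw [ha, hb]
          exact mul_inv_cancel₀ (by linarith)
        rw [hone, one_smul]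
    | succ N ih =>
        have hsub : range (N + 1) ×ˢ range (N + 1) ⊆ range (N + 2) ×ˢ range (N + 2) :=
          Finset.product_subset_product (Finset.range_subset_range.mpr (by omega))
            (Finset.range_subset_range.mpr (by omega))
        rw [← Finset.sum_sdiff hsub, ih]
        have hmax : ∀ q ∈ (range (N + 2) ×ˢ range (N + 2)) \ (range (N + 1) ×ˢ range (N + 1)),
            max q.1 q.2 = N + 1 := by
          intro q hq
          simp only [Finset.mem_sdiff, Finset.mem_product, Finset.mem_range] at hq
          omega
        have hdiff : (∑ q ∈ (range (N + 2) ×ˢ range (N + 2)) \ (range (N + 1) ×ˢ range (N + 1)),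
            f q) = (∑ q ∈ (range (N + 2) ×ˢ range (N + 2)) \ (range (N + 1) ×ˢ range (N + 1)),
              aa p lam q.1 * bb p lam q.2) • Pop hν (N + 1) := by
          rw [Finset.sum_smul]
          exact Finset.sum_congr rfl fun q hq => by simp only [hfdef]; rw [hmax q hq]
        have hscal0 : (∑ q ∈ (range (N + 2) ×ˢ range (N + 2)) \ (range (N + 1) ×ˢ range (N + 1)),
            aa p lam q.1 * bb p lam q.2) = 0 := by
          have h := Finset.sum_sdiff (f := fun q : ℕ × ℕ => aa p lam q.1 * bb p lam q.2) hsub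
          have h1 := hsqscal (N + 1)
          have h2 := hsqscal N
          rw [show N + 1 + 1 = N + 2 from rfl] at h1
          linarith
        rw [hdiff, hscal0, zero_smul, zero_add]
  have hmono : Monotone (fun N : ℕ => range (N + 1) ×ˢ range (N + 1)) := by
    intro a b hab
    exact Finset.product_subset_product (Finset.range_subset_range.mpr (by omega))
      (Finset.range_subset_range.mpr (by omega))
  have hex : ∀ q : ℕ × ℕ, ∃ N, q ∈ range (N + 1) ×ˢ range (N + 1) := fun q =>
    ⟨max q.1 q.2, by simp [Finset.mem_product, Finset.mem_range]⟩
  have h1 : Tendsto (fun N => ∑ q ∈ range (N + 1) ×ˢ range (N + 1), f q) atTop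
      (nhds (∑' q, f q)) :=
    (hf.hasSum).comp (tendsto_atTop_finset_of_monotone hmono hex)
  have h2 : Tendsto (fun N => ∑ q ∈ range (N + 1) ×ˢ range (N + 1), f q) atTop
      (nhds (1 : Hl2 ν →L[ℝ] Hl2 ν)) := by
    simp only [hW]
    exact tendsto_const_nhds
  exact tendsto_nhds_unique h1 h2

theorem ABone : Aop hν p lam * Bop hν p lam = 1 := by
  rw [Aop, Bop, series_mul hν _ _ (aa_abs_summable hp0 hp1 hlam) (bb_abs_summable hp0 hp1 hlam)]
  exact double_eq_one hν hp0 hp1 hlam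

theorem BAone : Bop hν p lam * Aop hν p lam = 1 := by
  rw [Aop, Bop, series_mul hν _ _ (bb_abs_summable hp0 hp1 hlam) (aa_abs_summable hp0 hp1 hlam)]
  rw [← double_eq_one hν hp0 hp1 hlam]
  rw [← Equiv.tsum_eq (Equiv.prodComm ℕ ℕ)
    (fun q : ℕ × ℕ => (aa p lam q.1 * bb p lam q.2) • Pop hν (max q.1 q.2))]
  exact tsum_congr fun q => by
    simp only [Equiv.prodComm_apply, Prod.fst_swap, Prod.snd_swap]
    rw [mul_comm, max_comm]

end Op
end HL
end S4

section S5
set_option maxHeartbeats 2000000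
namespace HL
open Filter Finset
open scoped Classical
variable {ν : ℕ} (hν : 2 ≤ ν) {p lam : ℝ} (hp0 : 0 < p) (hp1 : p < 1) (hlam : 0 < lam)

def Top (p : ℝ) : Hl2 ν →L[ℝ] Hl2 ν := ∑' r : ℕ, ((1 - p) * p ^ r) • Pop hν (r + 1)

theorem hdelta_apply (x y : HX ν) : (hdelta ν x : Hl2 ν) y = if y = x then 1 else 0 := by
  rw [hdelta]
  by_cases h : y = x
  · subst h; simp [lp.single_apply]
  · simp [lp.single_apply, h]

theorem cubeSum_delta (s : ℕ) (x₀ x : HX ν) :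
    cubeSum ν s x₀ (hdelta ν x) = if x ∈ cube ν s x₀ then 1 else 0 := by
  classical
  rw [cubeSum]
  have h1 : ∀ y : HX ν, (cube ν s x₀).indicator (fun y => (hdelta ν x : Hl2 ν) y) y =
      if y = x then (if x ∈ cube ν s x₀ then 1 else 0) else 0 := fun y => by
    by_cases hy : y = x
    · subst hy
      by_cases hm : y ∈ cube ν s x₀
      · simp [Set.indicator_of_mem hm, hdelta_apply, hm]
      · simp [Set.indicator_of_notMem hm, hm]
    · by_cases hm : y ∈ cube ν s x₀
      · simp [Set.indicator_of_mem hm, hdelta_apply, hy]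
      · simp [Set.indicator_of_notMem hm, hy]
  rw [_root_.tsum_subtype]
  rw [tsum_congr h1, tsum_eq_single x (fun y hy => by rw [if_neg hy])]
  rw [if_pos rfl]


include hp0 hp1

theorem geo_nonneg (r : ℕ) : 0 ≤ (1 - p) * p ^ r := by
  have := pow_nonneg (le_of_lt hp0) r
  nlinarith

theorem geo_abs_summable : Summable (fun r : ℕ => |(1 - p) * p ^ r|) := by
  have h : (fun r : ℕ => |(1 - p) * p ^ r|) = fun r : ℕ => (1 - p) * p ^ r :=
    funext fun r => abs_of_nonneg (geo_nonneg hp0 hp1 r)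
  rw [h]
  exact (summable_geometric_of_lt_one (le_of_lt hp0) hp1).mul_left _

theorem geo_tsum : ∑' r : ℕ, (1 - p) * p ^ r = 1 := by
  rw [tsum_mul_left, tsum_geometric_of_lt_one (le_of_lt hp0) hp1]
  exact mul_inv_cancel₀ (by linarith)

theorem Pop_apply_le (r : ℕ) (ψ : Hl2 ν) (x : HX ν) : |(Pop hν r ψ : Hl2 ν) x| ≤ ‖ψ‖ := by
  have h1 : |(Pop hν r ψ : Hl2 ν) x| ≤ ‖Pop hν r ψ‖ := by
    simpa [Real.norm_eq_abs] using
      lp.norm_apply_le_norm (by norm_num : (2:ℝ≥0∞) ≠ 0) (Pop hν r ψ) x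
  have h2 : ‖Pop hν r ψ‖ ≤ 1 * ‖ψ‖ := PopL_norm hν r ψ
  linarith

theorem Delta_eq {Δ : Hl2 ν →L[ℝ] Hl2 ν} (hΔ : IsHierLap ν p Δ) :
    Δ = Top hν p - 1 := by
  refine ContinuousLinearMap.ext fun ψ => lp.ext (funext fun x => ?_)
  have hsum1 : Summable fun r : ℕ => (1 - p) * p ^ r * ((Pop hν (r + 1) ψ : Hl2 ν) x) := by
    apply Summable.of_norm_bounded (g := fun r => (1 - p) * p ^ r * ‖ψ‖)
    · exact ((summable_geometric_of_lt_one (le_of_lt hp0) hp1).mul_left _).mul_right _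
    · intro r
      rw [Real.norm_eq_abs, abs_mul, abs_of_nonneg (geo_nonneg hp0 hp1 r)]
      exact mul_le_mul_of_nonneg_left (Pop_apply_le hν hp0 hp1 (r+1) ψ x)
        (geo_nonneg hp0 hp1 r)
  have hsum2 : Summable fun r : ℕ => (1 - p) * p ^ r * (ψ x : ℝ) :=
    ((summable_geometric_of_lt_one (le_of_lt hp0) hp1).mul_left _).mul_right _
  have hterm : ∀ r : ℕ, (1 - p) * p ^ r *
      (((ν : ℝ) ^ (r + 1))⁻¹ * cubeSum ν (r + 1) x ψ - ψ x) =
      (1 - p) * p ^ r * ((Pop hν (r + 1) ψ : Hl2 ν) x) - (1 - p) * p ^ r * (ψ x) := fun r => by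
    rw [Pop_apply]; ring
  have hTop : ((Top hν p ψ : Hl2 ν) x : ℝ) =
      ∑' r : ℕ, (1 - p) * p ^ r * ((Pop hν (r + 1) ψ : Hl2 ν) x) := by
    have h := ContinuousLinearMap.map_tsum (evop ψ x)
      (op_summable hν (geo_abs_summable hp0 hp1) (fun r => r + 1))
    simp only [evop_apply] at h
    rw [Top, h]
    exact tsum_congr fun r => by
      simp [ContinuousLinearMap.smul_apply, lp.coeFn_smul, Pi.smul_apply, smul_eq_mul]
  have hone : ∑' r : ℕ, (1 - p) * p ^ r * (ψ x : ℝ) = ψ x := by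
    rw [tsum_mul_right, geo_tsum hp0 hp1, one_mul]
  calc (Δ ψ : Hl2 ν) x
      = ∑' r : ℕ, (1 - p) * p ^ r *
          (((ν : ℝ) ^ (r + 1))⁻¹ * cubeSum ν (r + 1) x ψ - ψ x) := hΔ ψ x
    _ = ∑' r : ℕ, ((1 - p) * p ^ r * ((Pop hν (r + 1) ψ : Hl2 ν) x) -
          (1 - p) * p ^ r * (ψ x)) := tsum_congr hterm
    _ = (∑' r : ℕ, (1 - p) * p ^ r * ((Pop hν (r + 1) ψ : Hl2 ν) x)) -
          ∑' r : ℕ, (1 - p) * p ^ r * (ψ x : ℝ) := Summable.tsum_sub hsum1 hsum2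
    _ = ((Top hν p ψ : Hl2 ν) x) - ψ x := by rw [hTop, hone]
    _ = (((Top hν p - 1) ψ : Hl2 ν) x) := by
        simp [ContinuousLinearMap.sub_apply, lp.coeFn_sub, Pi.sub_apply]

include hlam

theorem Aop_eq : Aop hν p lam = lam • (1 : Hl2 ν →L[ℝ] Hl2 ν) + 1 - Top hν p := by
  rw [Aop, Summable.tsum_eq_zero_add (op_summable hν (aa_abs_summable hp0 hp1 hlam) (fun r => r))]
  have h0 : aa p lam 0 • Pop hν 0 = lam • (1 : Hl2 ν →L[ℝ] Hl2 ν) + 1 := by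
    rw [Pop_zero, show aa p lam 0 = lam + 1 by simp [aa], add_smul, one_smul]
  have h1 : ∑' r : ℕ, aa p lam (r + 1) • Pop hν (r + 1) = -(Top hν p) := by
    rw [Top, ← tsum_neg]
    exact tsum_congr fun r => by
      rw [show aa p lam (r + 1) = -((1 - p) * p ^ r) by simp [aa], neg_smul]
  rw [h0, h1]
  abel

theorem A_eq_resolvent {Δ : Hl2 ν →L[ℝ] Hl2 ν} (hΔ : IsHierLap ν p Δ) :
    lam • (1 : Hl2 ν →L[ℝ] Hl2 ν) - Δ = Aop hν p lam := by
  rw [Delta_eq hν hp0 hp1 hΔ, Aop_eq hν hp0 hp1 hlam]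
  abel

/-- the unit -/
def Aunit : (Hl2 ν →L[ℝ] Hl2 ν)ˣ where
  val := Aop hν p lam
  inv := Bop hν p lam
  val_inv := ABone (hν := hν) (hp0 := hp0) (hp1 := hp1) (hlam := hlam)
  inv_val := BAone (hν := hν) (hp0 := hp0) (hp1 := hp1) (hlam := hlam)

theorem ring_inverse_eq {Δ : Hl2 ν →L[ℝ] Hl2 ν} (hΔ : IsHierLap ν p Δ) :
    Ring.inverse (lam • (1 : Hl2 ν →L[ℝ] Hl2 ν) - Δ) = Bop hν p lam := by
  rw [A_eq_resolvent hν hp0 hp1 hlam hΔ]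
  rw [show Aop hν p lam = ((Aunit hν hp0 hp1 hlam : (Hl2 ν →L[ℝ] Hl2 ν)ˣ) :
    Hl2 ν →L[ℝ] Hl2 ν) from rfl, Ring.inverse_unit]
  rfl

include hν in
theorem kernel_eq {Δ : Hl2 ν →L[ℝ] Hl2 ν} (hΔ : IsHierLap ν p Δ) (x₀ x : HX ν) :
    resolvK ν Δ lam x₀ x =
      ∑' s : ℕ, bb p lam s * ((ν : ℝ) ^ s)⁻¹ * (if dh ν x₀ x ≤ s then 1 else 0) := by
  classical
  rw [resolvK, ring_inverse_eq hν hp0 hp1 hlam hΔ]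
  have hinner : @inner ℝ _ _ ((Bop hν p lam) (hdelta ν x)) (hdelta ν x₀) =
      ((Bop hν p lam (hdelta ν x) : Hl2 ν) x₀ : ℝ) := by
    simp only [hdelta]
    rw [lp.inner_single_right]
    simp [RCLike.inner_apply]
  rw [hinner]
  have hmap := ContinuousLinearMap.map_tsum (evop (hdelta ν x) x₀)
    (op_summable hν (bb_abs_summable hp0 hp1 hlam) (fun s => s))
  simp only [evop_apply] at hmap
  rw [show Bop hν p lam = ∑' s, bb p lam s • Pop hν s from rfl, hmap]
  refine tsum_congr fun s => ?_
  have h1 : ((bb p lam s • Pop hν s) (hdelta ν x) : Hl2 ν) x₀ =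
      bb p lam s * ((Pop hν s (hdelta ν x) : Hl2 ν) x₀) := by
    simp [ContinuousLinearMap.smul_apply, lp.coeFn_smul, Pi.smul_apply, smul_eq_mul]
  rw [h1, Pop_apply, cubeSum_delta]
  have : x ∈ cube ν s x₀ ↔ dh ν x₀ x ≤ s := dh_le_iff.symm
  by_cases hd : dh ν x₀ x ≤ s
  · rw [if_pos (this.mpr hd), if_pos hd]; ring
  · rw [if_neg (fun hm => hd (this.mp hm)), if_neg hd]; ring

end HL
end S5

section S6
namespace HL
open Filter Finset
open scoped Classical
variable {ν : ℕ} (hν : 2 ≤ ν) {p lam : ℝ} (hp0 : 0 < p) (hp1 : p < 1) (hlam : 0 < lam)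

def Fc (ν : ℕ) (p lam : ℝ) (s : ℕ) : ℝ := cc p lam s * ((ν : ℝ) ^ s)⁻¹
def Hc (ν : ℕ) (p lam : ℝ) (s : ℕ) : ℝ := bb p lam s * ((ν : ℝ) ^ s)⁻¹

include hν hp0 hp1 hlam

theorem Fc_summable : Summable (Fc ν p lam) := by
  have hν0 := nu_pos hν
  have hν1 : (1:ℝ) < (ν:ℝ) := by exact_mod_cast (by omega : 1 < ν)
  have hinv1 : ((ν:ℝ))⁻¹ < 1 := by
    rw [inv_lt_one_iff₀]
    right; exact hν1
  apply Summable.of_nonneg_of_le (fun s => ?_) (fun s => ?_)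
    ((summable_geometric_of_lt_one (by positivity) hinv1).mul_left lam⁻¹)
  · exact le_of_lt (mul_pos (cc_pos hp0 hp1 hlam s) (by positivity))
  · rw [Fc, ← inv_pow]
    have h2 := cc_le hp0 hp1 hlam s
    have h3 : (0:ℝ) ≤ ((ν:ℝ)⁻¹) ^ s := by positivity
    nlinarith [cc_pos hp0 hp1 hlam s]

theorem Fc_shift_summable (k : ℕ) : Summable (fun s => Fc ν p lam (s + k)) :=
  (summable_nat_add_iff k).mpr (Fc_summable hν hp0 hp1 hlam)

theorem Hc_eq (s : ℕ) : Hc ν p lam s =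
    Fc ν p lam s - (ν : ℝ)⁻¹ * (if s = 0 then 0 else Fc ν p lam (s - 1)) := by
  have hν0 := nu_pos hν
  rcases s with _ | s
  · simp [Hc, Fc, bb]
  · simp only [Hc, Fc, bb, Nat.succ_ne_zero, if_false, Nat.succ_sub_one]
    rw [sub_mul]
    have h1 : ((ν:ℝ) ^ (s + 1))⁻¹ = ((ν:ℝ) ^ s)⁻¹ * (ν:ℝ)⁻¹ := by
      rw [pow_succ, mul_inv]
    rw [h1]
    ring

theorem Gc_summable : Summable (fun s => if s = 0 then 0 else Fc ν p lam (s - 1)) := by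
  apply (summable_nat_add_iff 1).mp
  simp only [Nat.succ_ne_zero, if_false, Nat.add_sub_cancel]
  exact Fc_summable hν hp0 hp1 hlam

theorem Gc_tsum : ∑' s : ℕ, (if s = 0 then 0 else Fc ν p lam (s - 1)) = ∑' s, Fc ν p lam s := by
  rw [Summable.tsum_eq_zero_add (Gc_summable hν hp0 hp1 hlam)]
  simp

theorem Hc_summable : Summable (Hc ν p lam) := by
  rw [funext (Hc_eq hν hp0 hp1 hlam)]
  exact (Fc_summable hν hp0 hp1 hlam).sub ((Gc_summable hν hp0 hp1 hlam).mul_left _)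

theorem diag_sum : ∑' s, Hc ν p lam s = (1 - (ν : ℝ)⁻¹) * ∑' s, Fc ν p lam s := by
  rw [tsum_congr (Hc_eq hν hp0 hp1 hlam),
    Summable.tsum_sub (Fc_summable hν hp0 hp1 hlam) ((Gc_summable hν hp0 hp1 hlam).mul_left _),
    tsum_mul_left, Gc_tsum hν hp0 hp1 hlam]
  ring

theorem off_sum (m : ℕ) :
    ∑' s, (if m + 1 ≤ s then Hc ν p lam s else 0) =
      -(Fc ν p lam m * (ν : ℝ)⁻¹) + (1 - (ν : ℝ)⁻¹) * ∑' s, Fc ν p lam (m + 1 + s) := by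
  have hν0 := nu_pos hν
  set K : ℕ → ℝ := fun s => if m + 1 ≤ s then Hc ν p lam s else 0 with hK
  have hKsum : Summable K := by
    apply Summable.of_norm_bounded (g := fun s => |Hc ν p lam s|)
    · apply Summable.of_nonneg_of_le (fun s => abs_nonneg _) (fun s => ?_)
        ((bb_abs_summable hp0 hp1 hlam).mul_right ((1:ℝ)))
      rw [Hc, abs_mul]
      have h2 : |((ν:ℝ) ^ s)⁻¹| ≤ 1 := by
        rw [abs_of_nonneg (by positivity)]
        apply inv_le_one_of_one_le₀
        exact one_le_pow₀ (by exact_mod_cast by omega)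
      have h3 := abs_nonneg (bb p lam s)
      nlinarith [abs_nonneg (((ν:ℝ) ^ s)⁻¹)]
    · intro s
      simp only [hK, Real.norm_eq_abs]
      by_cases h : m + 1 ≤ s
      · rw [if_pos h]
      · rw [if_neg h]; simp
  have hsplit := Summable.sum_add_tsum_nat_add (f := K) (m + 1) hKsum
  have hzero : ∑ i ∈ range (m + 1), K i = 0 :=
    Finset.sum_eq_zero fun i hi => by
      simp only [hK]
      exact if_neg (by simp at hi; omega)
  have htail : ∀ s : ℕ, K (s + (m + 1)) =
      Fc ν p lam (s + (m + 1)) - (ν:ℝ)⁻¹ * Fc ν p lam (s + m) := fun s => by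
    simp only [hK]
    rw [if_pos (by omega), Hc_eq hν hp0 hp1 hlam, if_neg (by omega)]
    have he : s + (m + 1) - 1 = s + m := by omega
    rw [he]
  have h4 : ∑' s, K (s + (m + 1)) =
      (∑' s, Fc ν p lam (s + (m + 1))) - (ν:ℝ)⁻¹ * ∑' s, Fc ν p lam (s + m) := by
    rw [tsum_congr htail,
      Summable.tsum_sub (Fc_shift_summable hν hp0 hp1 hlam (m+1))
        ((Fc_shift_summable hν hp0 hp1 hlam m).mul_left _), tsum_mul_left]
  have h5 : ∑' s, Fc ν p lam (s + m) = Fc ν p lam m + ∑' s, Fc ν p lam (s + (m + 1)) := by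
    rw [Summable.tsum_eq_zero_add (Fc_shift_summable hν hp0 hp1 hlam m)]
    congr 1
    · simp
    · exact tsum_congr fun s => congrArg (Fc ν p lam) (by omega)
  have h6 : ∑' s, Fc ν p lam (s + (m + 1)) = ∑' s, Fc ν p lam (m + 1 + s) :=
    tsum_congr fun s => congrArg (Fc ν p lam) (by omega)
  calc ∑' s, K s = ∑ i ∈ range (m + 1), K i + ∑' s, K (s + (m + 1)) := hsplit.symm
  _ = ∑' s, K (s + (m + 1)) := by rw [hzero, zero_add]
  _ = (∑' s, Fc ν p lam (s + (m + 1))) - (ν:ℝ)⁻¹ * ∑' s, Fc ν p lam (s + m) := h4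
  _ = -(Fc ν p lam m * (ν : ℝ)⁻¹) + (1 - (ν : ℝ)⁻¹) * ∑' s, Fc ν p lam (m + 1 + s) := by
      rw [h5, h6]; ring

theorem Fc_form (s : ℕ) : Fc ν p lam s = 1 / ((lam + p ^ s) * (ν:ℝ) ^ s) := by
  rw [Fc, cc, one_div, mul_inv]

end HL
end S6

theorem stmt7 (ν : ℕ) (hν : 2 ≤ ν) (p : ℝ) (hp0 : 0 < p) (hp1 : p < 1)
    (Δ : Hl2 ν →L[ℝ] Hl2 ν) (hΔ : IsHierLap ν p Δ) :
    ∀ lam : ℝ, 0 < lam →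
      (∀ x : HX ν,
        resolvK ν Δ lam x x =
          (1 - (ν : ℝ)⁻¹) * ∑' s : ℕ, 1 / ((lam + p ^ s) * (ν : ℝ) ^ s)) ∧
      (∀ x₀ x : HX ν, x₀ ≠ x →
        resolvK ν Δ lam x₀ x =
          -(1 / ((lam + p ^ (dh ν x₀ x - 1)) * (ν : ℝ) ^ dh ν x₀ x)) +
          (1 - (ν : ℝ)⁻¹) *
            ∑' s : ℕ, 1 / ((lam + p ^ (dh ν x₀ x + s)) * (ν : ℝ) ^ (dh ν x₀ x + s))) := by
  classical
  intro lam hlam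
  constructor
  · intro x
    rw [HL.kernel_eq (hν := hν) (hp0 := hp0) (hp1 := hp1) (hlam := hlam) hΔ x x]
    have hd : dh ν x x = 0 := HL.dh_self x
    have h1 : ∀ s : ℕ, HL.bb p lam s * ((ν:ℝ) ^ s)⁻¹ * (if dh ν x x ≤ s then 1 else 0) =
        HL.Hc ν p lam s := fun s => by
      rw [hd, if_pos (Nat.zero_le s), mul_one, HL.Hc]
    rw [tsum_congr h1, HL.diag_sum hν hp0 hp1 hlam]
    congr 1
    exact tsum_congr fun s => HL.Fc_form hν hp0 hp1 hlam s
  · intro x₀ x hne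
    rw [HL.kernel_eq (hν := hν) (hp0 := hp0) (hp1 := hp1) (hlam := hlam) hΔ x₀ x]
    have hr : 1 ≤ dh ν x₀ x := HL.dh_pos hne
    obtain ⟨m, hm⟩ : ∃ m, dh ν x₀ x = m + 1 := ⟨dh ν x₀ x - 1, by omega⟩
    have h1 : ∀ s : ℕ, HL.bb p lam s * ((ν:ℝ) ^ s)⁻¹ * (if dh ν x₀ x ≤ s then 1 else 0) =
        (if m + 1 ≤ s then HL.Hc ν p lam s else 0) := fun s => by
      rw [hm]
      by_cases h : m + 1 ≤ s
      · rw [if_pos h, if_pos h, mul_one, HL.Hc]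
      · rw [if_neg h, if_neg h, mul_zero]
    rw [tsum_congr h1, HL.off_sum hν hp0 hp1 hlam m]
    have hFm : HL.Fc ν p lam m * (ν:ℝ)⁻¹ =
        1 / ((lam + p ^ (dh ν x₀ x - 1)) * (ν : ℝ) ^ dh ν x₀ x) := by
      rw [HL.Fc, HL.cc, hm, Nat.add_sub_cancel, one_div, mul_inv, pow_succ, mul_inv]
      ring
    have hFs : ∑' s, HL.Fc ν p lam (m + 1 + s) =
        ∑' s : ℕ, 1 / ((lam + p ^ (dh ν x₀ x + s)) * (ν : ℝ) ^ (dh ν x₀ x + s)) := by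
      refine tsum_congr fun s => ?_
      rw [HL.Fc_form hν hp0 hp1 hlam, hm]
    rw [hFm, hFs]
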